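/- Let A be a PC(η)-axial algebra and let a and b be primitive axes of A. Then φ_a(b) = φ_b(a), i.e. the coefficient of a in the A_1(a)-component of b equals the coefficient of b in the A_1(b)-component of a. -/
import Mathlib


open Submodule

variable {F : Type*} [Field F] {A : Type*} [NonUnitalNonAssocCommRing A]
  [Module F A] [SMulCommClass F A A] [IsScalarTower F A A]

variable (F) in
/-- The `lam`-eigenspace of the adjoint map of `a`. -/
def PCeig (a : A) (lam : F) : Submodule F A where
  carrier := {x : A | a * x = lam • x}
  add_mem' := by
    intro x y hx hy
    simp only [Set.mem_setOf_eq] at hx hy ⊢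
    rw [mul_add, hx, hy, smul_add]
  zero_mem' := by simp
  smul_mem' := by
    intro c x hx
    simp only [Set.mem_setOf_eq] at hx ⊢
    rw [mul_smul_comm, hx, smul_smul, smul_smul, mul_comm]

variable (F) in
/-- The fusion law `PC(η)` for an idempotent (axis) `a`. -/
structure IsPCAxis (η : F) (a : A) : Prop where
  idem : a * a = a
  decomp : PCeig F a 1 ⊔ PCeig F a η ⊔ PCeig F a (1/2 : F) = ⊤
  fus11 : ∀ x ∈ PCeig F a 1, ∀ y ∈ PCeig F a 1, x * y ∈ PCeig F a 1
  fus1e : ∀ x ∈ PCeig F a 1, ∀ y ∈ PCeig F a η, x * y ∈ PCeig F a η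
  fus1h : ∀ x ∈ PCeig F a 1, ∀ y ∈ PCeig F a (1/2 : F), x * y ∈ PCeig F a (1/2 : F)
  fusee : ∀ x ∈ PCeig F a η, ∀ y ∈ PCeig F a η, x * y ∈ PCeig F a 1
  fuseh : ∀ x ∈ PCeig F a η, ∀ y ∈ PCeig F a (1/2 : F), x * y ∈ PCeig F a (1/2 : F)
  fushh : ∀ x ∈ PCeig F a (1/2 : F), ∀ y ∈ PCeig F a (1/2 : F),
    x * y ∈ PCeig F a 1 ⊔ PCeig F a η

variable (F) in
/-- A primitive axis: an axis with `A_1(a) = F·a` (one-dimensional). -/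
def IsPrimPCAxis (η : F) (a : A) : Prop :=
  IsPCAxis F η a ∧ a ≠ 0 ∧ PCeig F a 1 = Submodule.span F {a}

variable (F A) in
/-- A `PC(η)`-axial algebra: generated, as a non-unital algebra, by a (nonempty) set of axes. -/
def IsPCAxialAlgebra (η : F) : Prop :=
  ∃ X : Set A, X.Nonempty ∧ (∀ a ∈ X, IsPCAxis F η a) ∧
    NonUnitalAlgebra.adjoin F X = ⊤

variable (F A) in
/-- A primitive `PC(η)`-axial algebra: generated by a (nonempty) set of primitive axes. -/
def IsPrimPCAxialAlgebra (η : F) : Prop :=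
  ∃ X : Set A, X.Nonempty ∧ (∀ a ∈ X, IsPrimPCAxis F η a) ∧
    NonUnitalAlgebra.adjoin F X = ⊤

set_option linter.unusedSectionVars false in
lemma mem_PCeig {a x : A} {l : F} : x ∈ PCeig F a l ↔ a * x = l • x := Iff.rfl

/-- Eigenvectors for the three distinct eigenvalues `1, η, 1/2` are independent. -/
lemma eig_unique {η : F} (h2 : (2 : F) ≠ 0) (hη1 : η ≠ 1) (hηh : η ≠ 1 / 2) {a x y z : A}
    (hx : x ∈ PCeig F a 1) (hy : y ∈ PCeig F a η) (hz : z ∈ PCeig F a (1 / 2 : F))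
    (h : x + y + z = 0) : x = 0 ∧ y = 0 ∧ z = 0 := by
  have hx' : a * x = (1 : F) • x := hx
  have hy' : a * y = η • y := hy
  have hz' : a * z = ((1 : F) / 2) • z := hz
  have hhalf : ((1 : F) / 2) ≠ 0 := div_ne_zero one_ne_zero h2
  have e2 : x + η • y + ((1 : F) / 2) • z = 0 := by
    have := congrArg (fun t => a * t) h
    simp only [mul_add, hx', hy', hz', mul_zero, one_smul] at this
    exact this
  have e3 : x + (η * η) • y + (((1 : F) / 2) * ((1 : F) / 2)) • z = 0 := by
    have := congrArg (fun t => a * t) e2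
    simp only [mul_add, mul_smul_comm, hx', hy', hz', mul_zero, one_smul, smul_smul] at this
    exact this
  have hy0 : ((η - 1 / 2) * (η - 1)) • y = 0 := by
    linear_combination (norm := (match_scalars <;> field_simp <;> try ring1)) e3 - ((3 : F) / 2) • e2 + ((1 : F) / 2) • h
  have hyz : y = 0 := by
    rcases smul_eq_zero.mp hy0 with hc | hc
    · rcases mul_eq_zero.mp hc with hc | hc
      · exact absurd (sub_eq_zero.mp hc) hηh
      · exact absurd (sub_eq_zero.mp hc) hη1
    · exact hc
  subst hyz
  have hx0 : ((1 : F) / 2) • x = 0 := by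
    linear_combination (norm := (match_scalars <;> field_simp <;> try ring1)) e2 - ((1 : F) / 2) • h
  have hxz : x = 0 := by
    rcases smul_eq_zero.mp hx0 with hc | hc
    · exact absurd hc hhalf
    · exact hc
  subst hxz
  simpa using h

/-- The core computation: comparing the two eigenspace decompositions of `b*(b*a)`. -/
lemma core {η : F} (h2 : (2 : F) ≠ 0) (hη1 : η ≠ 1) (hηh : η ≠ 1 / 2) {a b : A}
    (ha : IsPCAxis F η a) (hb : IsPCAxis F η b) {α β : F} {u v u' v' : A}
    (hu : u ∈ PCeig F a η) (hv : v ∈ PCeig F a (1 / 2 : F))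
    (hu' : u' ∈ PCeig F b η) (hv' : v' ∈ PCeig F b (1 / 2 : F))
    (hbd : b = α • a + u + v) (had : a = β • b + u' + v') :
    (((1 : F) - η) * (α - β)) • v = 0 ∧ (v = 0 → ((1 : F) - 2 * (α * η)) • u = 0) := by
  have haidem : a * a = a := ha.idem
  have hbidem : b * b = b := hb.idem
  have ha1 : a ∈ PCeig F a 1 := by rw [mem_PCeig, haidem, one_smul]
  have au : a * u = η • u := hu
  have av : a * v = ((1 : F) / 2) • v := hv
  have bu' : b * u' = η • u' := hu'
  have bv' : b * v' = ((1 : F) / 2) • v' := hv'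
  -- products of u, v
  have huu : u * u ∈ PCeig F a 1 := ha.fusee u hu u hu
  have huvm : u * v ∈ PCeig F a (1 / 2 : F) := ha.fuseh u hu v hv
  obtain ⟨z1, hz1, zη, hzη, hv2eq⟩ := Submodule.mem_sup.mp (ha.fushh v hv v hv)
  have hv2eq : v * v = z1 + zη := hv2eq.symm
  -- b in a-coordinates and a*b
  have hab : a * b = α • a + η • u + ((1 : F) / 2) • v := by
    rw [hbd, mul_add, mul_add, mul_smul_comm, haidem, au, av]
  have hba2 : b * a = α • a + η • u + ((1 : F) / 2) • v := by rw [mul_comm b a, hab]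
  -- expansion of b = b*b
  have hsq : b = (α * α) • a + ((2 : F) * (α * η)) • u + α • v
      + u * u + (2 : F) • (u * v) + (z1 + zη) := by
    conv_lhs => rw [← hbidem, hbd]
    rw [← hv2eq]
    simp only [add_mul, mul_add, smul_mul_assoc, mul_smul_comm,
      mul_comm u a, mul_comm v a, mul_comm v u, haidem, au, av]
    match_scalars <;> field_simp <;> try ring1
  have hsum1 : ((α * α) • a + u * u + z1 - α • a)
      + (((2 : F) * (α * η)) • u + zη - u)
      + (α • v + (2 : F) • (u * v) - v) = 0 := by
    linear_combination (norm := (match_scalars <;> field_simp <;> try ring1)) hbd - hsq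
  obtain ⟨-, h2c, h3c⟩ := eig_unique h2 hη1 hηh
    (sub_mem (add_mem (add_mem (smul_mem _ _ ha1) huu) hz1) (smul_mem _ _ ha1))
    (sub_mem (add_mem (smul_mem _ _ hu) hzη) hu)
    (sub_mem (add_mem (smul_mem _ _ hv) (smul_mem _ _ huvm)) hv) hsum1
  have h_uv : (2 : F) • (u * v) = v - α • v := by
    linear_combination (norm := (match_scalars <;> field_simp <;> try ring1)) h3c
  have hzη2 : zη = u - ((2 : F) * (α * η)) • u := by
    linear_combination (norm := (match_scalars <;> field_simp <;> try ring1)) h2c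
  constructor
  · -- main identity via b*(b*a)
    have hba3 : b * a = β • b + η • u' + ((1 : F) / 2) • v' := by
      rw [had, mul_add, mul_add, mul_smul_comm, hbidem, bu', bv']
    have hbba : b * (b * a) = β • b + (η * η) • u' + (((1 : F) / 2) * ((1 : F) / 2)) • v' := by
      rw [hba3]
      simp only [mul_add, mul_smul_comm, hbidem, bu', bv', smul_smul]
    have II2 : b * (b * a)
        = ((η + (1 : F) / 2) * α - η * ((1 : F) / 2) + (β * ((1 - η) * ((1 : F) / 2))) * α) • a
        + ((η + (1 : F) / 2) * η + β * ((1 - η) * ((1 : F) / 2))) • u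
        + ((η + (1 : F) / 2) * ((1 : F) / 2) + β * ((1 - η) * ((1 : F) / 2))) • v := by
      have II : b * (b * a) = (η + (1 : F) / 2) • (b * a) - (η * ((1 : F) / 2)) • a
          + (β * ((1 - η) * ((1 : F) / 2))) • b := by
        rw [hbba, hba3]
        conv_rhs => rw [had]
        match_scalars <;> field_simp <;> try ring1
      rw [II, hba2, hbd]
      match_scalars <;> field_simp <;> try ring1
    have E2 : b * (b * a)
        = ((α * α) • a + η • (u * u) + ((1 : F) / 2) • z1)
        + ((α * (η * η) + α * η) • u + ((1 : F) / 2) • zη)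
        + ((α * (((1 : F) / 2) * ((1 : F) / 2)) + α * ((1 : F) / 2)) • v
            + (((1 : F) / 2) + η) • (u * v)) := by
      conv_lhs => rw [hba2, hbd]
      simp only [add_mul, mul_add, smul_mul_assoc, mul_smul_comm,
        mul_comm u a, mul_comm v a, mul_comm v u, haidem, au, av, hv2eq]
      match_scalars <;> field_simp <;> try ring1
    have hsum2 : (((α * α) • a + η • (u * u) + ((1 : F) / 2) • z1
          - ((η + (1 : F) / 2) * α - η * ((1 : F) / 2) + (β * ((1 - η) * ((1 : F) / 2))) * α) • a))
        + (((α * (η * η) + α * η) • u + ((1 : F) / 2) • zη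
          - ((η + (1 : F) / 2) * η + β * ((1 - η) * ((1 : F) / 2))) • u))
        + (((α * (((1 : F) / 2) * ((1 : F) / 2)) + α * ((1 : F) / 2)) • v
            + (((1 : F) / 2) + η) • (u * v)
          - ((η + (1 : F) / 2) * ((1 : F) / 2) + β * ((1 - η) * ((1 : F) / 2))) • v)) = 0 := by
      linear_combination (norm := (match_scalars <;> field_simp <;> try ring1)) II2 - E2
    obtain ⟨-, -, h3⟩ := eig_unique h2 hη1 hηh
      (sub_mem (add_mem (add_mem (smul_mem _ _ ha1) (smul_mem _ _ huu)) (smul_mem _ _ hz1))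
        (smul_mem _ _ ha1))
      (sub_mem (add_mem (smul_mem _ _ hu) (smul_mem _ _ hzη)) (smul_mem _ _ hu))
      (sub_mem (add_mem (smul_mem _ _ hv) (smul_mem _ _ huvm)) (smul_mem _ _ hv)) hsum2
    linear_combination (norm := (match_scalars <;> field_simp <;> try ring1)) (2 : F) • h3 - (((1 : F) / 2) + η) • h_uv
  · -- degenerate information when v = 0
    intro hv0
    have hvv0 : z1 + zη = 0 := by rw [← hv2eq, hv0, mul_zero]
    have hvv0' : z1 + zη + (0 : A) = 0 := by rw [add_zero]; exact hvv0
    obtain ⟨-, hzη0, -⟩ := eig_unique h2 hη1 hηh hz1 hzη (zero_mem _) hvv0'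
    rw [hzη0] at hzη2
    linear_combination (norm := (match_scalars <;> field_simp <;> try ring1)) - hzη2
set_option maxHeartbeats 1000000

/-- If `b = α • a` for axes `a`, `b`, then `α = 1` and `b = a`. -/
lemma scalar_axis {η : F} {a b : A} (ha : IsPrimPCAxis F η a) (hb : IsPrimPCAxis F η b)
    {α : F} (hbeq : b = α • a) : α = 1 ∧ b = a := by
  have haa : (α * α) • a = α • a := by
    have h := hb.1.idem
    rw [hbeq, smul_mul_assoc, mul_smul_comm, ha.1.idem, smul_smul] at h
    exact h
  have hαα : α * α = α := by
    have h0 : (α * α - α) • a = 0 := by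
      rw [sub_smul, haa, sub_self]
    rcases smul_eq_zero.mp h0 with hc | hc
    · exact sub_eq_zero.mp hc
    · exact absurd hc ha.2.1
  have hαne : α ≠ 0 := by
    intro h0
    exact hb.2.1 (by rw [hbeq, h0, zero_smul])
  have hα1 : α = 1 := mul_left_cancel₀ hαne (by rw [hαα, mul_one] : α * α = α * 1)
  exact ⟨hα1, by rw [hbeq, hα1, one_smul]⟩

/-- If `b = α • a` and `a = β • b + u' + v'` is the eigen-decomposition, then `α = β`. -/
lemma scalar_case (η : F) (h2 : (2 : F) ≠ 0) (hη1 : η ≠ 1) (hηh : η ≠ 1 / 2)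
    {a b : A} (ha : IsPrimPCAxis F η a) (hb : IsPrimPCAxis F η b)
    {α β : F} {u' v' : A}
    (hu' : u' ∈ PCeig F b η) (hv' : v' ∈ PCeig F b (1 / 2 : F))
    (had : a = β • b + u' + v') (hbeq : b = α • a) : α = β := by
  obtain ⟨hα1, hbaeq⟩ := scalar_axis ha hb hbeq
  rw [hbaeq] at had hu' hv'
  have ha1 : a ∈ PCeig F a 1 := by rw [mem_PCeig, ha.1.idem, one_smul]
  have hsum : (β - 1) • a + u' + v' = 0 := by
    rw [sub_smul, one_smul]
    linear_combination (norm := (match_scalars <;> field_simp <;> try ring1)) (-1 : F) • had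
  obtain ⟨h1', -, -⟩ := eig_unique h2 hη1 hηh (smul_mem _ _ ha1) hu' hv' hsum
  rcases smul_eq_zero.mp h1' with hc | hc
  · rw [hα1, sub_eq_zero.mp hc]
  · exact absurd hc ha.2.1

/-- for primitive axes `a`, `b` of a `PC(η)`-axial algebra, `φ_a(b) = φ_b(a)`. -/
theorem stmt2 (η : F) (h2 : (2 : F) ≠ 0) (hη1 : η ≠ 1) (hηh : η ≠ 1 / 2)
    (hA : IsPCAxialAlgebra F A η)
    (a b : A) (ha : IsPrimPCAxis F η a) (hb : IsPrimPCAxis F η b)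
    (α β : F) (u v u' v' : A)
    (hu : u ∈ PCeig F a η) (hv : v ∈ PCeig F a (1 / 2 : F))
    (hu' : u' ∈ PCeig F b η) (hv' : v' ∈ PCeig F b (1 / 2 : F))
    (hbd : b = α • a + u + v) (had : a = β • b + u' + v') :
    α = β := by
  have hone : (1 : F) - η ≠ 0 := sub_ne_zero.mpr (Ne.symm hη1)
  have hcore1 := core h2 hη1 hηh ha.1 hb.1 hu hv hu' hv' hbd had
  have hcore2 := core h2 hη1 hηh hb.1 ha.1 hu' hv' hu hv had hbd
  have extract : ∀ {γ : F} {w : A}, w ≠ 0 → (((1 : F) - η) * γ) • w = 0 → γ = 0 := by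
    intro γ w hw h
    rcases smul_eq_zero.mp h with hc | hc
    · rcases mul_eq_zero.mp hc with hc | hc
      · exact absurd hc hone
      · exact hc
    · exact absurd hc hw
  by_cases hv0 : v = 0
  · by_cases hv'0 : v' = 0
    · -- v = 0 and v' = 0
      by_cases hu0 : u = 0
      · -- b = α • a
        exact scalar_case η h2 hη1 hηh ha hb hu' hv' had
          (by rw [hbd, hu0, hv0, add_zero, add_zero])
      · by_cases hu'0 : u' = 0
        · -- a = β • b
          exact (scalar_case η h2 hη1 hηh hb ha hu hv hbd
            (by rw [had, hu'0, hv'0, add_zero, add_zero])).symm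
        · -- u ≠ 0 and u' ≠ 0 : both α and β equal 1/(2η)
          have c1 : (1 : F) - 2 * (α * η) = 0 := by
            rcases smul_eq_zero.mp (hcore1.2 hv0) with hc | hc
            · exact hc
            · exact absurd hc hu0
          have c2 : (1 : F) - 2 * (β * η) = 0 := by
            rcases smul_eq_zero.mp (hcore2.2 hv'0) with hc | hc
            · exact hc
            · exact absurd hc hu'0
          have hη0 : η ≠ 0 := by
            intro h0
            rw [h0] at c1
            simp at c1
          have h' : α * (2 * η) = β * (2 * η) := by linear_combination c2 - c1
          exact mul_right_cancel₀ (mul_ne_zero h2 hη0) h'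
    · -- v' ≠ 0 : swapped core identity
      exact (sub_eq_zero.mp (extract hv'0 hcore2.1)).symm
  · -- v ≠ 0 : main case
    exact sub_eq_zero.mp (extract hv0 hcore1.1)
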